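/- With Σ^{CRS} = (1/|G|)·Σ_{g∈G} |g⟩⟨g|^C ⊗ U_g^R τ (U_g^R)† ⊗ U_g^S σ (U_g^S)† as above, the conditional mutual information satisfies I(C:S|R)_Σ = Γ(τ ⊗ σ) - Γ(τ), where Γ is the relative entropy of asymmetry with respect to G (with the representation g ↦ U_g^R ⊗ U_g^S on R⊗S). -/

import Mathlib

open Matrix
open scoped Kronecker ComplexOrder
open scoped Classical

variable {n : Type*} [Fintype n] [DecidableEq n]

/-- Density matrix predicate -/
def IsDensityMatrix (ρ : Matrix n n ℂ) : Prop := ρ.PosSemidef ∧ ρ.trace = 1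

/-- von Neumann entropy, base 2 -/
noncomputable def vnEntropy (A : Matrix n n ℂ) : ℝ :=
  if h : A.IsHermitian then -∑ i, h.eigenvalues i * Real.logb 2 (h.eigenvalues i) else 0

/-- twirl over a finite group -/
noncomputable def twirl {G : Type*} [Group G] [Fintype G]
    (U : G →* Matrix.unitaryGroup n ℂ) (ρ : Matrix n n ℂ) : Matrix n n ℂ :=
  (Fintype.card G : ℂ)⁻¹ • ∑ g : G, (U g : Matrix n n ℂ) * ρ * star (U g : Matrix n n ℂ)

/-- relative entropy of asymmetry -/
noncomputable def relEntAsym {G : Type*} [Group G] [Fintype G]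
    (U : G →* Matrix.unitaryGroup n ℂ) (ρ : Matrix n n ℂ) : ℝ :=
  vnEntropy (twirl U ρ) - vnEntropy ρ

/-- the old Mathlib `Matrix.PosSemidef.sqrt` (removed upstream), restored with its old definition -/
noncomputable def Matrix.PosSemidef.sqrt {A : Matrix n n ℂ} (hA : A.PosSemidef) : Matrix n n ℂ :=
  hA.1.eigenvectorUnitary.1 * diagonal ((↑) ∘ (fun x : ℝ => Real.sqrt x) ∘ hA.1.eigenvalues) *
    (star hA.1.eigenvectorUnitary : Matrix n n ℂ)

/-- square root of a PSD matrix (0 otherwise) -/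
noncomputable def sqrtPSD (A : Matrix n n ℂ) : Matrix n n ℂ :=
  if h : A.PosSemidef then h.sqrt else 0

/-- trace norm -/
noncomputable def traceNorm (A : Matrix n n ℂ) : ℝ :=
  ((Matrix.posSemidef_conjTranspose_mul_self A).sqrt.trace).re

/-- fidelity F(ρ,σ) = ‖√ρ√σ‖₁ -/
noncomputable def fidelity (ρ σ : Matrix n n ℂ) : ℝ := traceNorm (sqrtPSD ρ * sqrtPSD σ)

/-- binary entropy, base 2 -/
noncomputable def binEntropy2 (x : ℝ) : ℝ := -x * Real.logb 2 x - (1-x) * Real.logb 2 (1-x)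

/-- matrix logarithm (base 2) of a Hermitian matrix -/
noncomputable def matLogb (A : Matrix n n ℂ) : Matrix n n ℂ :=
  if h : A.IsHermitian then
    (h.eigenvectorUnitary : Matrix n n ℂ) *
      Matrix.diagonal (fun i => (Real.logb 2 (h.eigenvalues i) : ℂ)) *
      star (h.eigenvectorUnitary : Matrix n n ℂ)
  else 0

/-- quantum relative entropy, +∞ if support condition fails -/
noncomputable def relEntropy (ρ σ : Matrix n n ℂ) : EReal :=
  if ∀ v : n → ℂ, σ *ᵥ v = 0 → ρ *ᵥ v = 0 then
    (((ρ * (matLogb ρ - matLogb σ)).trace).re : EReal)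
  else ⊤

/-- complete positivity -/
def IsCompletelyPositive {m : Type*} [Fintype m] [DecidableEq m]
    (Φ : Matrix n n ℂ →ₗ[ℂ] Matrix m m ℂ) : Prop :=
  ∀ (k : ℕ) (M : Matrix (Fin k × n) (Fin k × n) ℂ), M.PosSemidef →
    (Matrix.of fun p q : Fin k × m =>
      (Φ (Matrix.of fun a b => M (p.1, a) (q.1, b))) p.2 q.2).PosSemidef

/-- CPTP map -/
def IsQuantumChannel {m : Type*} [Fintype m] [DecidableEq m]
    (Φ : Matrix n n ℂ →ₗ[ℂ] Matrix m m ℂ) : Prop :=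
  IsCompletelyPositive Φ ∧ ∀ A, (Φ A).trace = A.trace

/-- G-covariance of a map between systems with representations U, V -/
def IsCovariant {m : Type*} [Fintype m] [DecidableEq m] {G : Type*} [Group G]
    (U : G →* Matrix.unitaryGroup n ℂ) (V : G →* Matrix.unitaryGroup m ℂ)
    (Φ : Matrix n n ℂ →ₗ[ℂ] Matrix m m ℂ) : Prop :=
  ∀ g A, Φ ((U g : Matrix n n ℂ) * A * star (U g : Matrix n n ℂ))
    = (V g : Matrix m m ℂ) * Φ A * star (V g : Matrix m m ℂ)

/-- the classical-quantum state Σ^{CRS} -/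
noncomputable def SigmaCRS {nR nS G : Type*} [Fintype nR] [DecidableEq nR] [Fintype nS] [DecidableEq nS]
    [Group G] [Fintype G] [DecidableEq G]
    (U : G →* Matrix.unitaryGroup nR ℂ) (V : G →* Matrix.unitaryGroup nS ℂ)
    (τ : Matrix nR nR ℂ) (σ : Matrix nS nS ℂ) :
    Matrix (G × nR × nS) (G × nR × nS) ℂ :=
  Matrix.of fun x y =>
    if x.1 = y.1 then
      (Fintype.card G : ℂ)⁻¹
        * (((U x.1 : Matrix nR nR ℂ) * τ * star (U x.1 : Matrix nR nR ℂ)) x.2.1 y.2.1)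
        * (((V x.1 : Matrix nS nS ℂ) * σ * star (V x.1 : Matrix nS nS ℂ)) x.2.2 y.2.2)
    else 0


section Helpers
open Polynomial


lemma charpoly_diagonal' {m : Type*} [Fintype m] [DecidableEq m] (d : m → ℂ) :
    (Matrix.diagonal d).charpoly = ∏ i, (X - C (d i)) := by
  have h : Matrix.charmatrix (Matrix.diagonal d)
      = Matrix.diagonal (fun i => (X : ℂ[X]) - C (d i)) := by
    ext i j
    by_cases h : i = j
    · subst h; simp [Matrix.charmatrix_apply_eq]
    · simp [Matrix.charmatrix_apply_ne _ _ _ h, Matrix.diagonal_apply_ne _ h]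
  rw [Matrix.charpoly, h, Matrix.det_diagonal]

lemma charpoly_blockDiagonal' {m o : Type*} [Fintype m] [DecidableEq m] [Fintype o]
    [DecidableEq o] (M : o → Matrix m m ℂ) :
    (Matrix.blockDiagonal M).charpoly = ∏ k, (M k).charpoly := by
  unfold Matrix.charpoly
  rw [← Matrix.det_blockDiagonal]
  congr 1
  ext ⟨i, k⟩ ⟨j, k'⟩
  by_cases h : k = k'
  · subst h
    by_cases h2 : i = j <;>
      simp [Matrix.charmatrix_apply, Matrix.blockDiagonal_apply, h2, Matrix.diagonal_apply,
        Prod.ext_iff]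
  · simp [Matrix.charmatrix_apply, Matrix.blockDiagonal_apply, h, Matrix.diagonal_apply,
      Prod.ext_iff]

lemma charpoly_unitary_conj {m : Type*} [Fintype m] [DecidableEq m]
    (Um : Matrix.unitaryGroup m ℂ) (A : Matrix m m ℂ) :
    ((Um : Matrix m m ℂ) * A * star (Um : Matrix m m ℂ)).charpoly = A.charpoly := by
  have hUU : (Um : Matrix m m ℂ) * star (Um : Matrix m m ℂ) = 1 := Um.2.2
  have hmap : ((Um : Matrix m m ℂ).map (C : ℂ → ℂ[X])) *
      ((star (Um : Matrix m m ℂ)).map (C : ℂ → ℂ[X])) = 1 := by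
    rw [← Matrix.map_mul, hUU]
    ext i j
    by_cases h : i = j <;> simp [Matrix.one_apply, h]
  have key : Matrix.charmatrix ((Um : Matrix m m ℂ) * A * star (Um : Matrix m m ℂ))
      = ((Um : Matrix m m ℂ).map (C : ℂ → ℂ[X])) * Matrix.charmatrix A *
        ((star (Um : Matrix m m ℂ)).map (C : ℂ → ℂ[X])) := by
    rw [Matrix.charmatrix, Matrix.charmatrix, Matrix.mul_sub, Matrix.sub_mul]
    congr 1
    · symm
      rw [← RingHom.mapMatrix_apply, ← RingHom.mapMatrix_apply,
        ← (Matrix.scalar_commute (X : ℂ[X]) (fun r => Commute.all _ _) _).eq,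
        mul_assoc, ← _root_.map_mul, hUU, _root_.map_one, mul_one]
    · simp only [RingHom.mapMatrix_apply, Matrix.map_mul]
  have hdet : (((Um : Matrix m m ℂ).map (C : ℂ → ℂ[X]))).det *
      ((star (Um : Matrix m m ℂ)).map (C : ℂ → ℂ[X])).det = 1 := by
    rw [← Matrix.det_mul, hmap, Matrix.det_one]
  rw [Matrix.charpoly, Matrix.charpoly, key, Matrix.det_mul, Matrix.det_mul,
    mul_right_comm, hdet, one_mul]

lemma charpoly_smul_hermitian {m : Type*} [Fintype m] [DecidableEq m] {A : Matrix m m ℂ}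
    (hA : A.IsHermitian) (c : ℝ) :
    ((c : ℂ) • A).charpoly = ∏ i, (X - C (((c * hA.eigenvalues i : ℝ) : ℂ))) := by
  have h1 : (c : ℂ) • A = (hA.eigenvectorUnitary : Matrix m m ℂ) *
      Matrix.diagonal (fun i => ((c * hA.eigenvalues i : ℝ) : ℂ)) *
      star (hA.eigenvectorUnitary : Matrix m m ℂ) := by
    conv_lhs => rw [hA.spectral_theorem, Unitary.conjStarAlgAut_apply]
    rw [← smul_mul_assoc, ← mul_smul_comm]
    congr 1
    congr 1
    ext i j
    by_cases hij : i = j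
    · subst hij
      simp [Matrix.diagonal_apply_eq]
    · simp [Matrix.diagonal_apply_ne _ hij]
  rw [h1, charpoly_unitary_conj, charpoly_diagonal']

lemma roots_charpoly_smul_hermitian {m : Type*} [Fintype m] [DecidableEq m] {A : Matrix m m ℂ}
    (hA : A.IsHermitian) (c : ℝ) :
    ((c : ℂ) • A).charpoly.roots
      = Finset.univ.val.map (fun i => (((c * hA.eigenvalues i : ℝ) : ℂ))) := by
  rw [charpoly_smul_hermitian hA c, Finset.prod_eq_multiset_prod]
  have h2 : Multiset.map (fun i => X - C (((c * hA.eigenvalues i : ℝ) : ℂ))) Finset.univ.val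
      = Multiset.map (fun a : ℂ => X - C a)
        (Multiset.map (fun i => (((c * hA.eigenvalues i : ℝ) : ℂ))) Finset.univ.val) := by
    rw [Multiset.map_map]
    rfl
  rw [h2, Polynomial.roots_multiset_prod_X_sub_C]

lemma vnEntropy_eq_roots {m : Type*} [Fintype m] [DecidableEq m] {A : Matrix m m ℂ}
    (hA : A.IsHermitian) :
    vnEntropy A = -((A.charpoly.roots.map (fun z : ℂ => z.re * Real.logb 2 z.re)).sum) := by
  rw [vnEntropy, dif_pos hA]
  have h := roots_charpoly_smul_hermitian hA 1
  rw [Complex.ofReal_one, one_smul] at h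
  rw [h, Multiset.map_map]
  rw [Finset.sum_eq_multiset_sum]
  congr 1
  congr 1
  apply Multiset.map_congr rfl
  intro i _
  simp

lemma trace_eq_sum_eig {m : Type*} [Fintype m] [DecidableEq m] {A : Matrix m m ℂ}
    (hA : A.IsHermitian) : A.trace = ∑ i, (hA.eigenvalues i : ℂ) := by
  conv_lhs => rw [hA.spectral_theorem, Unitary.conjStarAlgAut_apply]
  rw [Matrix.trace_mul_cycle, Matrix.UnitaryGroup.star_mul_self, Matrix.one_mul,
    Matrix.trace_diagonal]
  rfl

lemma vnEntropy_block {m G : Type*} [Fintype m] [DecidableEq m] [Group G] [Fintype G]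
    [DecidableEq G] (ρ : Matrix m m ℂ) (hρ : ρ.IsHermitian) (htr : ρ.trace = 1)
    (Wf : G → Matrix.unitaryGroup m ℂ)
    (A : Matrix (G × m) (G × m) ℂ)
    (hA : A = (Matrix.blockDiagonal (fun g : G =>
        ((Fintype.card G : ℂ))⁻¹ •
          ((Wf g : Matrix m m ℂ) * ρ * star (Wf g : Matrix m m ℂ)))).submatrix
        Prod.swap Prod.swap) :
    vnEntropy A = Real.logb 2 (Fintype.card G) + vnEntropy ρ := by
  have : Nonempty G := ⟨1⟩
  have hNne : ((Fintype.card G : ℝ)) ≠ 0 := Nat.cast_ne_zero.mpr Fintype.card_ne_zero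
  set c : ℝ := ((Fintype.card G : ℝ))⁻¹ with hcdef
  have hc0 : c ≠ 0 := inv_ne_zero hNne
  have hc : ((Fintype.card G : ℂ))⁻¹ = (c : ℂ) := by
    rw [hcdef]; push_cast; ring
  -- blocks as conjugates of c • ρ
  have hblockeq : ∀ g : G, ((Fintype.card G : ℂ))⁻¹ •
      ((Wf g : Matrix m m ℂ) * ρ * star (Wf g : Matrix m m ℂ))
      = (Wf g : Matrix m m ℂ) * ((c : ℂ) • ρ) * star (Wf g : Matrix m m ℂ) := by
    intro g
    rw [hc, mul_smul_comm, smul_mul_assoc]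
  -- Hermitian
  have hblk : ∀ g : G, (((Fintype.card G : ℂ))⁻¹ •
      ((Wf g : Matrix m m ℂ) * ρ * star (Wf g : Matrix m m ℂ))).IsHermitian := by
    intro g
    show _ᴴ = _
    rw [Matrix.conjTranspose_smul]
    congr 1
    · rw [star_inv₀, star_natCast]
    · simp only [Matrix.conjTranspose_mul, Matrix.star_eq_conjTranspose,
        Matrix.conjTranspose_conjTranspose, hρ.eq, Matrix.mul_assoc]
  have hBD : (Matrix.blockDiagonal (fun g : G =>
      ((Fintype.card G : ℂ))⁻¹ •
        ((Wf g : Matrix m m ℂ) * ρ * star (Wf g : Matrix m m ℂ)))).IsHermitian := by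
    show _ᴴ = _
    rw [Matrix.blockDiagonal_conjTranspose]
    exact congrArg Matrix.blockDiagonal (funext fun g => hblk g)
  have hAH : A.IsHermitian := by
    rw [hA]; exact hBD.submatrix _
  -- charpoly
  have hreidx : A = (Matrix.reindex (Equiv.prodComm m G) (Equiv.prodComm m G)
      (Matrix.blockDiagonal (fun g : G =>
      ((Fintype.card G : ℂ))⁻¹ •
        ((Wf g : Matrix m m ℂ) * ρ * star (Wf g : Matrix m m ℂ))))) := by
    rw [hA]; ext ⟨g, i⟩ ⟨g', j⟩; rfl
  have hchar : A.charpoly = (((c : ℂ)) • ρ).charpoly ^ (Fintype.card G) := by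
    rw [hreidx, Matrix.charpoly_reindex, charpoly_blockDiagonal']
    rw [Finset.prod_congr rfl (fun g _ => by rw [hblockeq g, charpoly_unitary_conj]),
      Finset.prod_const, Finset.card_univ]
  have hroots : A.charpoly.roots = (Fintype.card G) • (((c : ℂ)) • ρ).charpoly.roots := by
    rw [hchar, Polynomial.roots_pow]
  -- sums
  have sum_nsmul : ∀ (k : ℕ) (t : Multiset ℝ), (k • t).sum = (k : ℝ) * t.sum := by
    intro k t
    induction k with
    | zero => simp
    | succ k ih => rw [succ_nsmul, Multiset.sum_add, ih]; push_cast; ring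
  have hsum : ∑ i, hρ.eigenvalues i = 1 := by
    have h1 := trace_eq_sum_eig hρ
    rw [htr, ← Complex.ofReal_sum] at h1
    exact_mod_cast h1.symm
  have hterm : ∀ x : ℝ, (c * x) * Real.logb 2 (c * x)
      = c * (x * Real.logb 2 x) + (c * Real.logb 2 c) * x := by
    intro x
    rcases eq_or_ne x 0 with h | h
    · simp [h]
    · simp only [Real.logb]
      rw [Real.log_mul hc0 h]
      ring
  rw [vnEntropy_eq_roots hAH, hroots, roots_charpoly_smul_hermitian hρ c,
    Multiset.map_nsmul, sum_nsmul, Multiset.map_map, ← Finset.sum_eq_multiset_sum]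
  simp only [Function.comp, Complex.ofReal_re]
  have hsum2 : ∑ i, (c * hρ.eigenvalues i) * Real.logb 2 (c * hρ.eigenvalues i)
      = c * (∑ i, hρ.eigenvalues i * Real.logb 2 (hρ.eigenvalues i)) + c * Real.logb 2 c := by
    rw [Finset.sum_congr rfl (fun i _ => hterm _), Finset.sum_add_distrib, ← Finset.mul_sum,
      ← Finset.mul_sum, hsum, mul_one]
  rw [hsum2, vnEntropy, dif_pos hρ]
  have hNc : (Fintype.card G : ℝ) * c = 1 := mul_inv_cancel₀ hNne
  have hlogc : Real.logb 2 c = - Real.logb 2 (Fintype.card G) := by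
    rw [hcdef, Real.logb_inv]
  rw [hlogc, mul_add, ← mul_assoc, ← mul_assoc, hNc, one_mul, one_mul]
  ring

lemma kron_conjT {a b : Type*} [Fintype a] [DecidableEq a] [Fintype b] [DecidableEq b]
    (A : Matrix a a ℂ) (B : Matrix b b ℂ) : (A ⊗ₖ B)ᴴ = Aᴴ ⊗ₖ Bᴴ := by
  ext x y
  simp [Matrix.conjTranspose_apply, mul_comm]

end Helpers

theorem condMutualInfo_eq_deltaGamma {nR nS G : Type*} [Fintype nR] [DecidableEq nR]
    [Fintype nS] [DecidableEq nS] [Group G] [Fintype G] [DecidableEq G]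
    (U : G →* Matrix.unitaryGroup nR ℂ) (V : G →* Matrix.unitaryGroup nS ℂ)
    (W : G →* Matrix.unitaryGroup (nR × nS) ℂ)
    (hW : ∀ g : G, (W g : Matrix (nR × nS) (nR × nS) ℂ)
      = (U g : Matrix nR nR ℂ) ⊗ₖ (V g : Matrix nS nS ℂ))
    (τ : Matrix nR nR ℂ) (σ : Matrix nS nS ℂ)
    (hτ : IsDensityMatrix τ) (hσ : IsDensityMatrix σ) :
    vnEntropy (Matrix.of fun p q : G × nR => ∑ s : nS,
        SigmaCRS U V τ σ (p.1, p.2, s) (q.1, q.2, s))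
      + vnEntropy (Matrix.of fun p q : nR × nS => ∑ g : G,
        SigmaCRS U V τ σ (g, p.1, p.2) (g, q.1, q.2))
      - vnEntropy (SigmaCRS U V τ σ)
      - vnEntropy (Matrix.of fun r r' : nR => ∑ g : G, ∑ s : nS,
        SigmaCRS U V τ σ (g, r, s) (g, r', s))
      = relEntAsym W (τ ⊗ₖ σ) - relEntAsym U τ := by
  classical
  have hτH : τ.IsHermitian := hτ.1.1
  have hσH : σ.IsHermitian := hσ.1.1
  have hτσH : (τ ⊗ₖ σ).IsHermitian := by
    show _ᴴ = _
    rw [kron_conjT, hτH.eq, hσH.eq]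
  have hτσtr : (τ ⊗ₖ σ).trace = 1 := by
    rw [Matrix.trace_kronecker, hτ.2, hσ.2, mul_one]
  have hWconj : ∀ g : G, (W g : Matrix (nR × nS) (nR × nS) ℂ) * (τ ⊗ₖ σ) *
      star (W g : Matrix (nR × nS) (nR × nS) ℂ)
      = ((U g : Matrix nR nR ℂ) * τ * star (U g : Matrix nR nR ℂ)) ⊗ₖ
        ((V g : Matrix nS nS ℂ) * σ * star (V g : Matrix nS nS ℂ)) := by
    intro g
    rw [hW g, Matrix.star_eq_conjTranspose, Matrix.star_eq_conjTranspose,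
      Matrix.star_eq_conjTranspose, kron_conjT, ← Matrix.mul_kronecker_mul,
      ← Matrix.mul_kronecker_mul]
  have htrV : ∀ g : G, ∑ s : nS,
      ((V g : Matrix nS nS ℂ) * σ * star (V g : Matrix nS nS ℂ)) s s = 1 := by
    intro g
    have h1 : ((V g : Matrix nS nS ℂ) * σ * star (V g : Matrix nS nS ℂ)).trace = 1 := by
      rw [Matrix.trace_mul_cycle, Matrix.UnitaryGroup.star_mul_self, Matrix.one_mul, hσ.2]
    simpa [Matrix.trace, Matrix.diag] using h1
  -- the four marginal identifications
  have e1 : (Matrix.of fun p q : G × nR => ∑ s : nS,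
        SigmaCRS U V τ σ (p.1, p.2, s) (q.1, q.2, s))
      = (Matrix.blockDiagonal (fun g : G => ((Fintype.card G : ℂ))⁻¹ •
          ((U g : Matrix nR nR ℂ) * τ * star (U g : Matrix nR nR ℂ)))).submatrix
          Prod.swap Prod.swap := by
    ext ⟨g, r⟩ ⟨g', r'⟩
    simp only [Matrix.of_apply, SigmaCRS, Matrix.submatrix_apply, Prod.swap_prod_mk,
      Matrix.blockDiagonal_apply, Matrix.smul_apply, smul_eq_mul]
    by_cases h : g = g'
    · subst h
      simp only [eq_self_iff_true, if_true]
      rw [← Finset.mul_sum, htrV g, mul_one]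
    · simp [h]
  have e3 : SigmaCRS U V τ σ
      = (Matrix.blockDiagonal (fun g : G => ((Fintype.card G : ℂ))⁻¹ •
          ((W g : Matrix (nR × nS) (nR × nS) ℂ) * (τ ⊗ₖ σ) *
            star (W g : Matrix (nR × nS) (nR × nS) ℂ)))).submatrix
          Prod.swap Prod.swap := by
    ext ⟨g, r, s⟩ ⟨g', r', s'⟩
    simp only [SigmaCRS, Matrix.of_apply, Matrix.submatrix_apply, Prod.swap_prod_mk,
      Matrix.blockDiagonal_apply, Matrix.smul_apply, smul_eq_mul, hWconj]
    by_cases h : g = g'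
    · subst h
      simp only [if_pos rfl, Matrix.kroneckerMap_apply, mul_assoc]
    · simp [h]
  have e2 : (Matrix.of fun p q : nR × nS => ∑ g : G,
        SigmaCRS U V τ σ (g, p.1, p.2) (g, q.1, q.2))
      = twirl W (τ ⊗ₖ σ) := by
    ext p q
    simp only [Matrix.of_apply, SigmaCRS, eq_self_iff_true, if_true, twirl, Matrix.smul_apply,
      Matrix.sum_apply, smul_eq_mul, Finset.mul_sum, hWconj, Matrix.kroneckerMap_apply]
    exact Finset.sum_congr rfl fun g _ => by ring
  have e4 : (Matrix.of fun r r' : nR => ∑ g : G, ∑ s : nS,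
        SigmaCRS U V τ σ (g, r, s) (g, r', s))
      = twirl U τ := by
    ext r r'
    simp only [Matrix.of_apply, SigmaCRS, eq_self_iff_true, if_true, twirl, Matrix.smul_apply,
      Matrix.sum_apply, smul_eq_mul, Finset.mul_sum]
    refine Finset.sum_congr rfl fun g _ => ?_
    rw [← Finset.mul_sum, htrV g, mul_one]
  have h1 := vnEntropy_block τ hτH hτ.2 (fun g => U g) _ e1
  have h3 := vnEntropy_block (τ ⊗ₖ σ) hτσH hτσtr (fun g => W g) _ e3
  rw [h1, h3, e2, e4, relEntAsym, relEntAsym]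
  ring
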